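/- Let K be a nonempty compact convex subset of a locally convex topological vector space, and let L₁, L₂ : K → ℝ be continuous affine maps with L₂(x) > 0 for all x ∈ K. Define F(x) := L₁(x)/L₂(x). Then F attains its minimum over K at an extreme point of K. -/

import Mathlib

/-- **Lemma.** Let `K` be a nonempty compact convex subset of a locally convex topological
vector space, and `L₁, L₂ : K → ℝ` continuous affine maps with `L₂ > 0` on `K`. Then
`F = L₁/L₂` attains its minimum over `K` at an extreme point of `K`. -/
theorem ratio_min_at_extreme_point
    {E : Type*} [AddCommGroup E] [Module ℝ E] [TopologicalSpace E]
    [IsTopologicalAddGroup E] [ContinuousSMul ℝ E] [LocallyConvexSpace ℝ E] [T2Space E]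
    (K : Set E) (hKne : K.Nonempty) (hKcp : IsCompact K) (hKcv : Convex ℝ K)
    (L₁ L₂ : E → ℝ)
    (hL₁aff : ∀ x ∈ K, ∀ y ∈ K, ∀ t ∈ Set.Icc (0 : ℝ) 1,
      L₁ (t • x + (1 - t) • y) = t * L₁ x + (1 - t) * L₁ y)
    (hL₂aff : ∀ x ∈ K, ∀ y ∈ K, ∀ t ∈ Set.Icc (0 : ℝ) 1,
      L₂ (t • x + (1 - t) • y) = t * L₂ x + (1 - t) * L₂ y)
    (hL₁cont : ContinuousOn L₁ K) (hL₂cont : ContinuousOn L₂ K)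
    (hL₂pos : ∀ x ∈ K, 0 < L₂ x) :
    ∃ x ∈ Set.extremePoints ℝ K, ∀ y ∈ K, L₁ x / L₂ x ≤ L₁ y / L₂ y := by
  set F : E → ℝ := fun x => L₁ x / L₂ x with hF
  have hFcont : ContinuousOn F K :=
    hL₁cont.div hL₂cont (fun x hx => (hL₂pos x hx).ne')
  obtain ⟨x₀, hx₀K, hx₀min⟩ := hKcp.exists_isMinOn hKne hFcont
  set m := F x₀ with hm
  set M : Set E := {x ∈ K | F x = m} with hM
  -- key: F of a convex combination is a convex combination of the F values
  have key : ∀ y ∈ K, ∀ z ∈ K, ∀ t : ℝ, 0 < t → t < 1 →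
      ∃ s : ℝ, 0 < s ∧ s < 1 ∧ F (t • y + (1 - t) • z) = s * F y + (1 - s) * F z := by
    intro y hy z hz t ht0 ht1
    have htI : t ∈ Set.Icc (0:ℝ) 1 := ⟨ht0.le, ht1.le⟩
    have hy2 := hL₂pos y hy
    have hz2 := hL₂pos z hz
    have hden : 0 < t * L₂ y + (1 - t) * L₂ z := by nlinarith
    refine ⟨t * L₂ y / (t * L₂ y + (1 - t) * L₂ z), div_pos (by positivity) hden, ?_, ?_⟩
    · rw [div_lt_one hden]; nlinarith
    · have h1 := hL₁aff y hy z hz t htI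
      have h2 := hL₂aff y hy z hz t htI
      have h1s : 1 - t * L₂ y / (t * L₂ y + (1 - t) * L₂ z)
          = (1 - t) * L₂ z / (t * L₂ y + (1 - t) * L₂ z) := by
        field_simp
        ring
      simp only [hF, h1, h2, h1s]
      field_simp
    
  have hMne : M.Nonempty := ⟨x₀, hx₀K, rfl⟩
  have hMcl : IsClosed M := by
    have : M = K ∩ F ⁻¹' {m} := by ext x; simp [hM]
    rw [this]
    exact hFcont.preimage_isClosed_of_isClosed hKcp.isClosed isClosed_singleton
  have hMcp : IsCompact M := hKcp.of_isClosed_subset hMcl (fun x hx => hx.1)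
  obtain ⟨x, hxM⟩ := hMcp.extremePoints_nonempty hMne
  obtain ⟨⟨hxK, hxm⟩, hxext⟩ := hxM
  refine ⟨x, ⟨hxK, ?_⟩, fun y hy => hxm.trans_le (hx₀min hy)⟩
  rintro y hy z hz ⟨a, b, ha, hb, hab, hxeq⟩
  have ha1 : a < 1 := by linarith
  obtain ⟨s, hs0, hs1, hseq⟩ := key y hy z hz a ha ha1
  have hb' : b = 1 - a := by linarith
  rw [hb'] at hxeq
  have hFx : F x = s * F y + (1 - s) * F z := by rw [← hxeq]; exact hseq
  have hmy : m ≤ F y := hx₀min hy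
  have hmz : m ≤ F z := hx₀min hz
  have hFy : F y = m := by nlinarith [hxm, hFx]
  have hFz : F z = m := by nlinarith [hxm, hFx]
  exact hxext ⟨hy, hFy⟩ ⟨hz, hFz⟩ ⟨a, 1 - a, ha, by linarith, by ring, hxeq⟩
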